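/- Let L be a Lie ring whose derived ideal L' = [L, L] is abelian. Let a and b be subrings of L, each of which is an additive complement of L' (i.e., L = L' + a with L' ∩ a = 0, and L = L' + b with L' ∩ b = 0). Suppose there exists a₀ ∈ a such that ad_{a₀} restricts to a bijection of L' onto itself. Then there exists z ∈ L' such that the automorphism exp(ad_z) = id + ad_z maps b onto a; in particular the two complements are conjugated by an inner automorphism. -/
import Mathlib


/-- Let `L` be a Lie ring with abelian derived ideal `L'`, and let `a`, `b` be
subrings of `L`, each an additive complement of `L'`.  If some `a₀ ∈ a` is such that
`ad_{a₀}` restricts to a bijection of `L'` onto itself, then there is `z ∈ L'` such that the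
automorphism `exp(ad_z) = id + ad_z` maps `b` onto `a`. -/
theorem stmt_6 {L : Type*} [LieRing L]
    (habel : ∀ a ∈ LieAlgebra.derivedSeries ℤ L 1, ∀ b ∈ LieAlgebra.derivedSeries ℤ L 1,
      ⁅a, b⁆ = (0 : L))
    (a b : LieSubalgebra ℤ L)
    (hsuma : ∀ y : L, ∃ z ∈ LieAlgebra.derivedSeries ℤ L 1, ∃ w ∈ a, y = z + w)
    (hinta : ∀ y ∈ LieAlgebra.derivedSeries ℤ L 1, y ∈ a → y = 0)
    (hsumb : ∀ y : L, ∃ z ∈ LieAlgebra.derivedSeries ℤ L 1, ∃ w ∈ b, y = z + w)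
    (hintb : ∀ y ∈ LieAlgebra.derivedSeries ℤ L 1, y ∈ b → y = 0)
    (a₀ : L) (ha₀ : a₀ ∈ a)
    (hmaps : ∀ z ∈ LieAlgebra.derivedSeries ℤ L 1, ⁅a₀, z⁆ ∈ LieAlgebra.derivedSeries ℤ L 1)
    (hinj : ∀ z ∈ LieAlgebra.derivedSeries ℤ L 1, ∀ w ∈ LieAlgebra.derivedSeries ℤ L 1,
      ⁅a₀, z⁆ = ⁅a₀, w⁆ → z = w)
    (hsurj : ∀ w ∈ LieAlgebra.derivedSeries ℤ L 1,
      ∃ z ∈ LieAlgebra.derivedSeries ℤ L 1, ⁅a₀, z⁆ = w) :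
    ∃ z ∈ LieAlgebra.derivedSeries ℤ L 1,
      (fun y : L => y + ⁅z, y⁆) '' (b : Set L) = (a : Set L) := by
  -- every bracket lies in the derived ideal
  have hS : ∀ x y : L, ⁅x, y⁆ ∈ LieAlgebra.derivedSeries ℤ L 1 := by
    intro x y
    rw [LieAlgebra.derivedSeries_def, LieAlgebra.derivedSeriesOfIdeal_succ,
      LieAlgebra.derivedSeriesOfIdeal_zero]
    exact LieSubmodule.lie_mem_lie (LieSubmodule.mem_top x) (LieSubmodule.mem_top y)
  -- decompose a₀ = c₀ + w₀ with c₀ ∈ L', w₀ ∈ b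
  obtain ⟨c₀, hc₀, w₀, hw₀, ha₀dec⟩ := hsumb a₀
  -- choose z ∈ L' with ⁅a₀, z⁆ = -c₀
  obtain ⟨z, hz, hzeq⟩ := hsurj (-c₀) (neg_mem hc₀)
  -- Key lemma: for every w ∈ b with decomposition w = c + x (c ∈ L', x ∈ a), ⁅z, w⁆ = -c
  have key : ∀ w ∈ b, ∀ c ∈ LieAlgebra.derivedSeries ℤ L 1, ∀ x ∈ a,
      w = c + x → ⁅z, w⁆ = -c := by
    intro w hw c hc x hx hdec
    -- brackets inside a and inside b vanish
    have hxa : ⁅x, a₀⁆ = 0 := hinta _ (hS x a₀) (a.lie_mem hx ha₀)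
    have hwb : ⁅w, w₀⁆ = 0 := hintb _ (hS w w₀) (b.lie_mem hw hw₀)
    -- the key identity ⁅c, w₀⁆ = ⁅x, c₀⁆
    have hid : ⁅c, w₀⁆ = ⁅x, c₀⁆ := by
      have h1 : ⁅w, a₀⁆ = ⁅c, w₀⁆ := by
        rw [hdec, ha₀dec]
        rw [add_lie, lie_add, lie_add]
        rw [habel c hc c₀ hc₀]
        have : ⁅x, c₀ + w₀⁆ = 0 := by rw [← ha₀dec]; exact hxa
        rw [lie_add] at this
        rw [this]
        abel
      have h2 : ⁅w, a₀⁆ = ⁅x, c₀⁆ := by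
        rw [ha₀dec, lie_add, hwb, add_zero, hdec, add_lie,
          habel c hc c₀ hc₀, zero_add]
      rw [← h1, h2]
    -- show ⁅a₀, -c - ⁅z,w⁆⁆ = 0 and conclude by injectivity
    have hD : -c - ⁅z, w⁆ ∈ LieAlgebra.derivedSeries ℤ L 1 :=
      sub_mem (neg_mem hc) (hS z w)
    have hcomp : ⁅a₀, -c - ⁅z, w⁆⁆ = 0 := by
      have j : ⁅a₀, ⁅z, w⁆⁆ = ⁅⁅a₀, z⁆, w⁆ + ⁅z, ⁅a₀, w⁆⁆ := (leibniz_lie a₀ z w)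
      have hz0 : ⁅z, ⁅a₀, w⁆⁆ = 0 := habel z hz _ (hS a₀ w)
      have hac : ⁅a₀, c⁆ = -⁅c, w₀⁆ := by
        rw [ha₀dec, add_lie, habel c₀ hc₀ c hc, zero_add, ← lie_skew]
      have hazw : ⁅a₀, ⁅z, w⁆⁆ = -⁅c₀, w⁆ := by
        rw [j, hz0, add_zero, hzeq, neg_lie]
      have hcw : ⁅c₀, w⁆ = ⁅c₀, x⁆ := by
        rw [hdec, lie_add, habel c₀ hc₀ c hc, zero_add]
      rw [lie_sub, lie_neg, hac, hazw, hcw, hid,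
        lie_skew x c₀]
      abel
    have := hinj _ hD 0 (zero_mem _) (by rw [hcomp, lie_zero])
    have h0 : -c - ⁅z, w⁆ = 0 := this
    rw [sub_eq_zero] at h0
    exact h0.symm
  refine ⟨z, hz, ?_⟩
  ext y
  constructor
  · rintro ⟨w, hw, rfl⟩
    obtain ⟨c, hc, x, hx, hdec⟩ := hsuma w
    have hzw := key w hw c hc x hx hdec
    simp only
    rw [hzw, hdec]
    have : c + x + -c = x := by abel
    rw [this]
    exact hx
  · intro hy
    obtain ⟨c, hc, w, hw, hdec⟩ := hsumb y
    have hwdec : w = -c + y := by rw [hdec]; abel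
    have hzw := key w hw (-c) (neg_mem hc) y hy hwdec
    refine ⟨w, hw, ?_⟩
    simp only
    rw [hzw, hwdec]
    abel
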